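/- Let (X,‖·‖,τ) satisfy the standard assumptions (τ coarser Hausdorff locally convex, sequentially complete on norm-bounded sets, with (X,τ)' norming). If f : [a,b] → X is τ-continuous and norm-bounded, then f is τ-Riemann integrable on [a,b], the Riemann sums also converge in the mixed topology γ(‖·‖,τ), and the resulting integral x satisfies ⟨x', x⟩ = ∫_a^b ⟨x', f(s)⟩ ds for every x' ∈ (X,γ)' (i.e., x is a γ-Pettis integral of f). -/

import Mathlib

noncomputable section

open Filter Topology

/-- The norm dual `X' = X →L[ℝ] ℝ` of `X` (with the operator norm); the topology on `X`
here is the norm topology, irrespective of any other topology in scope. -/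
abbrev wDualR (X : Type*) [NormedAddCommGroup X] [NormedSpace ℝ X] : Type _ := X →L[ℝ] ℝ

/-- A sequence is Cauchy with respect to a given (group) topology `t`. -/
def SeqCauchyIn {X : Type*} [AddCommGroup X] (t : TopologicalSpace X) (u : ℕ → X) : Prop :=
  ∀ U ∈ @nhds X t 0, ∃ N : ℕ, ∀ m ≥ N, ∀ n ≥ N, u m - u n ∈ U

/-- `γ` is the mixed topology `γ(‖·‖, τ)`: the finest linear topology agreeing with `τ` on
norm-bounded sets and lying between `τ` and the norm topology. -/
structure IsMixedTopology (X : Type*) [NormedAddCommGroup X] [NormedSpace ℝ X]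
    (τ γ : TopologicalSpace X) : Prop where
  le_tau : γ ≤ τ
  norm_le : (UniformSpace.toTopologicalSpace : TopologicalSpace X) ≤ γ
  addGroup : @IsTopologicalAddGroup X γ _
  contSMul : @ContinuousSMul ℝ X _ _ γ
  agrees : ∀ B : Set X, Bornology.IsBounded B →
    TopologicalSpace.induced ((↑) : B → X) γ = TopologicalSpace.induced ((↑) : B → X) τ
  finest : ∀ γ' : TopologicalSpace X, @IsTopologicalAddGroup X γ' _ →
    @ContinuousSMul ℝ X _ _ γ' →
    (UniformSpace.toTopologicalSpace : TopologicalSpace X) ≤ γ' → γ' ≤ τ →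
    (∀ B : Set X, Bornology.IsBounded B →
      TopologicalSpace.induced ((↑) : B → X) γ' = TopologicalSpace.induced ((↑) : B → X) τ) →
    γ ≤ γ'

/-- A topology `t` on `X` makes `X` a Mazur space if every `t`-sequentially continuous linear
functional is `t`-continuous. -/
def MazurIn (X : Type*) [NormedAddCommGroup X] [NormedSpace ℝ X]
    (t : TopologicalSpace X) : Prop :=
  ∀ f : X →ₗ[ℝ] ℝ,
    (∀ (u : ℕ → X) (x : X), Filter.Tendsto u Filter.atTop (@nhds X t x) →
      Filter.Tendsto (fun n => f (u n)) Filter.atTop (nhds (f x))) →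
    @Continuous X ℝ t _ ⇑f

/-- `(X, ‖·‖, τ)` is a Saks space: `τ` is generated by a directed family of seminorms `p`
with `‖x‖ = sup_i p i x`. -/
def IsSaksSpace (X : Type*) [NormedAddCommGroup X] [NormedSpace ℝ X]
    (τ : TopologicalSpace X) : Prop :=
  ∃ (ι : Type) (hι : Nonempty ι) (p : SeminormFamily ℝ X ι),
    Directed (· ≤ ·) p ∧ WithSeminorms (topology := τ) p ∧
    ∀ x : X, IsLUB (Set.range fun i => p i x) ‖x‖

/-- The Riemann sum of `f` for the tagged partition `(t, ξ)` with `n` subintervals. -/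
def RiemannSum {X : Type*} [NormedAddCommGroup X] [NormedSpace ℝ X]
    (f : ℝ → X) (n : ℕ) (t ξ : ℕ → ℝ) : X :=
  ∑ i ∈ Finset.range n, (t (i + 1) - t i) • f (ξ i)

/-- `(t, ξ)` is a tagged partition of `[a,b]` into `n` subintervals of mesh `< δ`. -/
def IsTaggedPartition (a b : ℝ) (n : ℕ) (t ξ : ℕ → ℝ) (δ : ℝ) : Prop :=
  t 0 = a ∧ t n = b ∧ (∀ i < n, t i ≤ t (i + 1)) ∧ (∀ i < n, t (i + 1) - t i < δ) ∧
    ∀ i < n, ξ i ∈ Set.Icc (t i) (t (i + 1))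

/-- `x` is the Riemann integral of `f` over `[a,b]` with respect to the topology `top`:
the Riemann sums converge to `x` in `top` as the mesh tends to `0`. -/
def HasRiemannIntegralIn {X : Type*} [NormedAddCommGroup X] [NormedSpace ℝ X]
    (top : TopologicalSpace X) (f : ℝ → X) (a b : ℝ) (x : X) : Prop :=
  ∀ U ∈ @nhds X top x, ∃ δ > (0:ℝ), ∀ (n : ℕ) (t ξ : ℕ → ℝ),
    IsTaggedPartition a b n t ξ δ → RiemannSum f n t ξ ∈ U

lemma step_mono {α : Type*} [Preorder α] {c : ℕ → α} {n : ℕ}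
    (hc : ∀ i < n, c i ≤ c (i+1)) : ∀ i j, i ≤ j → j ≤ n → c i ≤ c j := by
  intro i j hij hjn
  induction j with
  | zero => exact le_of_eq (congrArg c (Nat.le_zero.mp hij))
  | succ j ih =>
      rcases Nat.eq_or_lt_of_le hij with h | h
      · exact le_of_eq (congrArg c h)
      · exact (ih (Nat.lt_succ_iff.mp h) (by omega)).trans (hc j (by omega))

lemma sum_Ico_blocks {M : Type*} [AddCommMonoid M] (g : ℕ → M) (c : ℕ → ℕ)
    (n : ℕ) (hc : ∀ i < n, c i ≤ c (i+1)) :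
    ∑ i ∈ Finset.range n, ∑ j ∈ Finset.Ico (c i) (c (i+1)), g j
      = ∑ j ∈ Finset.Ico (c 0) (c n), g j := by
  induction n with
  | zero => simp
  | succ n ih =>
      rw [Finset.sum_range_succ, ih (fun i hi => hc i (by omega))]
      exact Finset.sum_Ico_consecutive g
        (step_mono hc 0 n (Nat.zero_le n) (Nat.le_succ n)) (hc n (by omega))

lemma taggedPartition_mono {a b : ℝ} {n : ℕ} {t ξ : ℕ → ℝ} {δ : ℝ}
    (hP : IsTaggedPartition a b n t ξ δ) : ∀ i j, i ≤ j → j ≤ n → t i ≤ t j :=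
  step_mono hP.2.2.1

lemma taggedPartition_mem {a b : ℝ} {n : ℕ} {t ξ : ℕ → ℝ} {δ : ℝ}
    (hP : IsTaggedPartition a b n t ξ δ) : ∀ i ≤ n, t i ∈ Set.Icc a b := by
  intro i hi
  constructor
  · rw [← hP.1]; exact taggedPartition_mono hP 0 i (Nat.zero_le i) hi
  · rw [← hP.2.1]; exact taggedPartition_mono hP i n hi le_rfl

lemma taggedPartition_tag_mem {a b : ℝ} {n : ℕ} {t ξ : ℕ → ℝ} {δ : ℝ}
    (hP : IsTaggedPartition a b n t ξ δ) : ∀ i < n, ξ i ∈ Set.Icc a b := by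
  intro i hi
  obtain ⟨h1, h2⟩ := hP.2.2.2.2 i hi
  exact ⟨(taggedPartition_mem hP i (by omega)).1.trans h1,
    h2.trans (taggedPartition_mem hP (i+1) (by omega)).2⟩

lemma taggedPartition_sum {a b : ℝ} {n : ℕ} {t ξ : ℕ → ℝ} {δ : ℝ}
    (hP : IsTaggedPartition a b n t ξ δ) :
    ∑ i ∈ Finset.range n, (t (i+1) - t i) = b - a := by
  rw [Finset.sum_range_sub (fun i => t i) n, hP.2.1, hP.1]

lemma riemannSum_norm_le {X : Type*} [NormedAddCommGroup X] [NormedSpace ℝ X]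
    {f : ℝ → X} {C a b : ℝ} {n : ℕ} {t ξ : ℕ → ℝ} {δ : ℝ}
    (hC : ∀ s ∈ Set.Icc a b, ‖f s‖ ≤ C)
    (hP : IsTaggedPartition a b n t ξ δ) :
    ‖RiemannSum f n t ξ‖ ≤ (b - a) * C := by
  calc ‖RiemannSum f n t ξ‖ ≤ ∑ i ∈ Finset.range n, ‖(t (i+1) - t i) • f (ξ i)‖ :=
        norm_sum_le _ _
    _ ≤ ∑ i ∈ Finset.range n, (t (i+1) - t i) * C := by
        refine Finset.sum_le_sum fun i hi => ?_
        rw [norm_smul, Real.norm_eq_abs,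
          abs_of_nonneg (sub_nonneg.mpr (hP.2.2.1 i (Finset.mem_range.mp hi)))]
        exact mul_le_mul_of_nonneg_left (hC _ (taggedPartition_tag_mem hP i (Finset.mem_range.mp hi)))
          (sub_nonneg.mpr (hP.2.2.1 i (Finset.mem_range.mp hi)))
    _ = (b - a) * C := by rw [← Finset.sum_mul, taggedPartition_sum hP]

lemma riemannSum_discretize {X : Type*} [NormedAddCommGroup X] [NormedSpace ℝ X]
    {f : ℝ → X} {C a b : ℝ} (hab : a < b)
    (hC : ∀ s ∈ Set.Icc a b, ‖f s‖ ≤ C) {n : ℕ} {t ξ : ℕ → ℝ} {δ : ℝ}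
    (hP : IsTaggedPartition a b n t ξ δ) (N : ℕ) (hN : 0 < N) :
    ∃ q : ℕ → ℝ, (∀ j < N, q j ∈ Set.Icc a b ∧ |q j - (a + j * ((b-a)/N))| < δ) ∧
      ‖RiemannSum f n t ξ - ∑ j ∈ Finset.range N, ((b-a)/N) • f (q j)‖
        ≤ n * ((b-a)/N) * C := by
  classical
  set h : ℝ := (b-a)/N with hh
  have hN' : (0:ℝ) < N := by exact_mod_cast hN
  have hh0 : 0 < h := div_pos (by linarith) hN'
  set c : ℕ → ℕ := fun i => ⌈(t i - a)/h⌉₊ with hcdef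
  have htmem := taggedPartition_mem hP
  have hcstep : ∀ i < n, c i ≤ c (i+1) := by
    intro i hi
    exact Nat.ceil_mono (by gcongr; exact hP.2.2.1 i hi)
  have hc0 : c 0 = 0 := by simp [hcdef, hP.1]
  have hcn : c n = N := by
    have : (t n - a)/h = (N:ℝ) := by
      rw [hP.2.1, hh, div_div_eq_mul_div, mul_comm, mul_div_assoc,
        div_self (sub_ne_zero.mpr (ne_of_gt hab)), mul_one]
    simp [hcdef, this]
  have hlow : ∀ i ≤ n, t i - a ≤ (c i : ℝ) * h := by
    intro i hi
    have := Nat.le_ceil ((t i - a)/h)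
    calc t i - a = ((t i - a)/h) * h := by field_simp
      _ ≤ (c i : ℝ) * h := by gcongr
  have hhigh : ∀ i ≤ n, (c i : ℝ) * h < (t i - a) + h := by
    intro i hi
    have h1 : (0:ℝ) ≤ (t i - a)/h := div_nonneg (by linarith [(htmem i hi).1]) hh0.le
    have h2 := Nat.ceil_lt_add_one h1
    calc (c i : ℝ) * h < ((t i - a)/h + 1) * h := by gcongr
      _ = (t i - a) + h := by field_simp
  set F : ℕ → ℕ := fun j => Nat.findGreatest (fun i => c i ≤ j) n with hFdef
  have hF0 : ∀ j : ℕ, c 0 ≤ j := by simp [hc0]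
  have hFfacts : ∀ j < N, F j < n ∧ c (F j) ≤ j ∧ j < c (F j + 1) := by
    intro j hj
    have hFle : F j ≤ n := Nat.findGreatest_le n
    have hspec : c (F j) ≤ j := Nat.findGreatest_spec (P := fun i => c i ≤ j) (Nat.zero_le n) (hF0 j)
    have hFlt : F j < n := by
      rcases Nat.lt_or_ge (F j) n with h' | h'
      · exact h'
      · exfalso
        have : F j = n := le_antisymm hFle h'
        rw [this, hcn] at hspec; omega
    refine ⟨hFlt, hspec, ?_⟩
    have := Nat.findGreatest_is_greatest (Nat.lt_succ_self (F j)) (by omega :  F j + 1 ≤ n)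
    exact Nat.not_le.mp this
  set q : ℕ → ℝ := fun j => ξ (F j) with hqdef
  have hmesh : ∀ i < n, t (i+1) - t i < δ := hP.2.2.2.1
  have hqprop : ∀ j < N, q j ∈ Set.Icc a b ∧ |q j - (a + j * h)| < δ := by
    intro j hj
    obtain ⟨hk, hck, hck1⟩ := hFfacts j hj
    have htag := hP.2.2.2.2 (F j) hk
    have h1 : t (F j) ≤ a + j * h := by
      have : (t (F j) - a)/h ≤ (j:ℝ) := by
        exact_mod_cast (Nat.ceil_le.mp hck)
      have := (div_le_iff₀ hh0).mp this
      linarith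
    have h2 : a + j * h < t (F j + 1) := by
      have : (j:ℝ) < (t (F j + 1) - a)/h := by
        exact_mod_cast (Nat.lt_ceil.mp hck1)
      have := (lt_div_iff₀ hh0).mp this
      linarith
    refine ⟨taggedPartition_tag_mem hP (F j) hk, ?_⟩
    have := hmesh (F j) hk
    rw [abs_sub_lt_iff]
    constructor <;> linarith [htag.1, htag.2]
  refine ⟨q, hqprop, ?_⟩
  have hgroup : ∑ j ∈ Finset.range N, h • f (q j)
      = ∑ i ∈ Finset.range n, (((c (i+1) - c i : ℕ)) : ℝ) • (h • f (ξ i)) := by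
    have hrange : Finset.range N = Finset.Ico (c 0) (c n) := by
      rw [hc0, hcn, Finset.range_eq_Ico]
    rw [hrange, ← sum_Ico_blocks (fun j => h • f (q j)) c n hcstep]
    refine Finset.sum_congr rfl fun i hi => ?_
    have hi' : i < n := Finset.mem_range.mp hi
    have heach : ∀ j ∈ Finset.Ico (c i) (c (i+1)), h • f (q j) = h • f (ξ i) := by
      intro j hj
      obtain ⟨hj1, hj2⟩ := Finset.mem_Ico.mp hj
      have hjN : j < N := by
        have hle : c (i+1) ≤ c n := step_mono hcstep (i+1) n (by omega) le_rfl
        omega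
      have hFj : F j = i := by
        have h1 : i ≤ F j := Nat.le_findGreatest (le_of_lt hi') hj1
        rcases Nat.eq_or_lt_of_le h1 with h' | h'
        · omega
        · exfalso
          have hFle : F j ≤ n := Nat.findGreatest_le n
          have hspec : c (F j) ≤ j := Nat.findGreatest_spec (P := fun i => c i ≤ j) (Nat.zero_le n) (hF0 j)
          have : c (i+1) ≤ c (F j) := step_mono hcstep (i+1) (F j) (by omega) hFle
          omega
      simp [hqdef, hFj]
    rw [Finset.sum_congr rfl heach, Finset.sum_const, Nat.card_Ico,
      ← Nat.cast_smul_eq_nsmul ℝ]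
  rw [hgroup]
  unfold RiemannSum
  rw [← Finset.sum_sub_distrib]
  have hterm : ∀ i ∈ Finset.range n,
      ‖(t (i+1) - t i) • f (ξ i) - (((c (i+1) - c i : ℕ)) : ℝ) • (h • f (ξ i))‖ ≤ h * C := by
    intro i hi
    have hi' : i < n := Finset.mem_range.mp hi
    have hcast : (((c (i+1) - c i : ℕ)) : ℝ) = (c (i+1) : ℝ) - (c i : ℝ) :=
      Nat.cast_sub (hcstep i hi')
    rw [smul_smul, ← sub_smul, norm_smul, Real.norm_eq_abs]
    have habs : |t (i+1) - t i - (((c (i+1) - c i : ℕ)) : ℝ) * h| ≤ h := by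
      rw [hcast]
      have b1 := hlow i (by omega)
      have b2 := hhigh i (by omega)
      have b3 := hlow (i+1) (by omega)
      have b4 := hhigh (i+1) (by omega)
      rw [abs_le]
      constructor <;> nlinarith
    have hfn : ‖f (ξ i)‖ ≤ C := hC _ (taggedPartition_tag_mem hP i hi')
    exact mul_le_mul habs hfn (norm_nonneg _) hh0.le
  calc ‖∑ i ∈ Finset.range n, ((t (i+1) - t i) • f (ξ i)
        - (((c (i+1) - c i : ℕ)) : ℝ) • (h • f (ξ i)))‖
      ≤ ∑ i ∈ Finset.range n, (h * C) := by
        refine (norm_sum_le _ _).trans (Finset.sum_le_sum hterm)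
    _ = n * h * C := by
        rw [Finset.sum_const, Finset.card_range, nsmul_eq_mul]; ring

lemma tau_unifCont {X : Type*} [NormedAddCommGroup X] [NormedSpace ℝ X]
    (τ : TopologicalSpace X) (haddgrp : @IsTopologicalAddGroup X τ _)
    {f : ℝ → X} {a b : ℝ} (hfc : @ContinuousOn ℝ X _ τ f (Set.Icc a b)) :
    ∀ U ∈ @nhds X τ 0, ∃ δ > (0:ℝ), ∀ s ∈ Set.Icc a b, ∀ r ∈ Set.Icc a b,
      |s - r| < δ → f s - f r ∈ U := by
  letI : TopologicalSpace X := τ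
  haveI : IsTopologicalAddGroup X := haddgrp
  letI : UniformSpace X := IsTopologicalAddGroup.rightUniformSpace X
  haveI : IsUniformAddGroup X := isUniformAddGroup_of_addCommGroup
  intro U hU
  have hufc : UniformContinuousOn f (Set.Icc a b) :=
    IsCompact.uniformContinuousOn_of_continuous isCompact_Icc hfc
  have hE : {p : X × X | p.2 - p.1 ∈ U} ∈ uniformity X := by
    rw [uniformity_eq_comap_nhds_zero X]
    exact Filter.preimage_mem_comap hU
  have h2 := hufc hE
  rw [Filter.mem_map, Filter.mem_inf_principal] at h2
  obtain ⟨δ, hδ, hd⟩ := Metric.mem_uniformity_dist.mp h2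
  refine ⟨δ, hδ, fun s hs r hr hsr => ?_⟩
  have : dist r s < δ := by rw [Real.dist_eq, abs_sub_comm]; exact hsr
  exact hd this (Set.mk_mem_prod hr hs)

lemma riemannSum_cauchy {X : Type*} [NormedAddCommGroup X] [NormedSpace ℝ X]
    (τ : TopologicalSpace X)
    (hcoarser : (UniformSpace.toTopologicalSpace : TopologicalSpace X) ≤ τ)
    (haddgrp : @IsTopologicalAddGroup X τ _)
    (hsmul : @ContinuousSMul ℝ X _ _ τ) (hlc : @LocallyConvexSpace ℝ X _ _ _ _ τ)
    {f : ℝ → X} {a b C : ℝ} (hab : a < b) (hC : ∀ s ∈ Set.Icc a b, ‖f s‖ ≤ C)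
    (hufc : ∀ U ∈ @nhds X τ 0, ∃ δ > (0:ℝ), ∀ s ∈ Set.Icc a b, ∀ r ∈ Set.Icc a b,
      |s - r| < δ → f s - f r ∈ U) :
    ∀ W ∈ @nhds X τ 0, ∃ δ > (0:ℝ), ∀ (n : ℕ) (t ξ : ℕ → ℝ) (m : ℕ) (u η : ℕ → ℝ),
      IsTaggedPartition a b n t ξ δ → IsTaggedPartition a b m u η δ →
      RiemannSum f n t ξ - RiemannSum f m u η ∈ W := by
  letI : TopologicalSpace X := τ
  haveI : IsTopologicalAddGroup X := haddgrp
  haveI : ContinuousSMul ℝ X := hsmul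
  haveI : LocallyConvexSpace ℝ X := hlc
  intro W hW
  obtain ⟨V, hV, hVadd⟩ := exists_nhds_zero_half hW
  obtain ⟨V2, hV2, hV2add⟩ := exists_nhds_zero_half hV
  have hV2' : V2 ∈ @nhds X UniformSpace.toTopologicalSpace 0 :=
    Filter.le_def.mp (nhds_mono hcoarser) V2 hV2
  obtain ⟨ε, hε, hball⟩ := Metric.mem_nhds_iff.mp hV2'
  have hs : Continuous fun y : X => (b - a) • y := continuous_const_smul _
  have hV3 : (fun y : X => (b - a) • y) ⁻¹' V ∈ 𝓝 (0:X) := by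
    apply hs.continuousAt.preimage_mem_nhds
    rwa [smul_zero]
  obtain ⟨S, hS, hSconv, hSsub⟩ :=
    (locallyConvexSpace_iff_exists_convex_subset_zero ℝ X).mp hlc _ hV3
  obtain ⟨δ', hδ', hδ'p⟩ := hufc S hS
  refine ⟨δ'/2, by linarith, ?_⟩
  intro n t ξ m u η hP hQ
  have hC0 : 0 ≤ C := le_trans (norm_nonneg (f a)) (hC a ⟨le_refl a, hab.le⟩)
  obtain ⟨N, hN⟩ := exists_nat_gt (max 0 ((n + m : ℝ) * (b - a) * C / (ε/2)))
  have hN0 : 0 < N := by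
    have h0 : (0:ℝ) < N := (le_max_left 0 _).trans_lt hN
    exact_mod_cast h0
  have hN' : (0:ℝ) < N := by exact_mod_cast hN0
  have hNbig : (n + m : ℝ) * ((b-a)/N) * C < ε/2 := by
    have h1 : (n + m : ℝ) * (b - a) * C / (ε/2) < N := (le_max_right 0 _).trans_lt hN
    have h2 : (n + m : ℝ) * (b - a) * C < N * (ε/2) :=
      (div_lt_iff₀ (by linarith)).mp h1
    have h3 : (n + m : ℝ) * ((b-a)/N) * C = (n + m : ℝ) * (b - a) * C / N := by ring
    rw [h3, div_lt_iff₀ hN']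
    linarith
  obtain ⟨qP, hqP, hqPnorm⟩ := riemannSum_discretize hab hC hP N hN0
  obtain ⟨qQ, hqQ, hqQnorm⟩ := riemannSum_discretize hab hC hQ N hN0
  set hstep : ℝ := (b-a)/N with hhdef
  have hstep0 : 0 ≤ hstep := le_of_lt (div_pos (by linarith) hN')
  set DP := ∑ j ∈ Finset.range N, hstep • f (qP j) with hDP
  set DQ := ∑ j ∈ Finset.range N, hstep • f (qQ j) with hDQ
  have hbound : (n:ℝ) * hstep * C < ε ∧ (m:ℝ) * hstep * C < ε := by
    constructor <;> nlinarith [mul_nonneg (mul_nonneg (Nat.cast_nonneg n) hstep0) hC0,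
      mul_nonneg (mul_nonneg (Nat.cast_nonneg m) hstep0) hC0]
  have hA : RiemannSum f n t ξ - DP ∈ V2 := by
    apply hball
    rw [Metric.mem_ball, dist_zero_right]
    exact lt_of_le_of_lt hqPnorm hbound.1
  have hCc : DQ - RiemannSum f m u η ∈ V2 := by
    apply hball
    rw [Metric.mem_ball, dist_zero_right, ← norm_neg, neg_sub]
    exact lt_of_le_of_lt hqQnorm hbound.2
  have hB : DP - DQ ∈ V := by
    have hrw : DP - DQ = (b-a) • (∑ j ∈ Finset.range N, ((N:ℝ))⁻¹ • (f (qP j) - f (qQ j))) := by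
      rw [hDP, hDQ, ← Finset.sum_sub_distrib, Finset.smul_sum]
      refine Finset.sum_congr rfl fun j _ => ?_
      rw [smul_smul, ← smul_sub, hhdef, div_eq_mul_inv]
    have hw : (∑ j ∈ Finset.range N, ((N:ℝ))⁻¹ • (f (qP j) - f (qQ j))) ∈ S := by
      refine Convex.sum_mem hSconv (fun j _ => by positivity) ?_ (fun j hj => ?_)
      · rw [Finset.sum_const, Finset.card_range, nsmul_eq_mul]
        exact mul_inv_cancel₀ (ne_of_gt hN')
      · have hj' : j < N := Finset.mem_range.mp hj
        obtain ⟨hqPmem, hqPd⟩ := hqP j hj'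
        obtain ⟨hqQmem, hqQd⟩ := hqQ j hj'
        refine hδ'p _ hqPmem _ hqQmem ?_
        calc |qP j - qQ j| ≤ |qP j - (a + j * ((b-a)/N))| + |(a + j * ((b-a)/N)) - qQ j| :=
              abs_sub_le _ _ _
          _ < δ'/2 + δ'/2 := by
              rw [abs_sub_comm (a + j * ((b-a)/N))]
              exact add_lt_add hqPd hqQd
          _ = δ' := by ring
    rw [hrw]
    exact Set.mem_preimage.mp (hSsub hw)
  have hsplit : RiemannSum f n t ξ - RiemannSum f m u η
      = ((RiemannSum f n t ξ - DP) + (DQ - RiemannSum f m u η)) + (DP - DQ) := by abel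
  rw [hsplit]
  exact hVadd _ (hV2add _ hA _ hCc) _ hB

lemma mixed_transfer {X : Type*} [NormedAddCommGroup X] [NormedSpace ℝ X]
    {τ γ : TopologicalSpace X} {B : Set X}
    (hag : TopologicalSpace.induced ((↑) : B → X) γ = TopologicalSpace.induced ((↑) : B → X) τ)
    {x : X} (hx : x ∈ B) {U : Set X} (hU : U ∈ @nhds X γ x) :
    ∃ V ∈ @nhds X τ x, ∀ y ∈ V, y ∈ B → y ∈ U := by
  have h1 : @nhds B (TopologicalSpace.induced ((↑) : B → X) γ) ⟨x, hx⟩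
      = Filter.comap ((↑) : B → X) (@nhds X γ x) := @nhds_induced X B γ _ ⟨x, hx⟩
  have h2 : @nhds B (TopologicalSpace.induced ((↑) : B → X) τ) ⟨x, hx⟩
      = Filter.comap ((↑) : B → X) (@nhds X τ x) := @nhds_induced X B τ _ ⟨x, hx⟩
  have h3 : ((↑) : B → X) ⁻¹' U ∈ Filter.comap ((↑) : B → X) (@nhds X τ x) := by
    rw [← h2, ← hag, h1]
    exact Filter.preimage_mem_comap hU
  obtain ⟨V, hV, hVsub⟩ := Filter.mem_comap.mp h3
  refine ⟨V, hV, fun y hyV hyB => ?_⟩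
  exact hVsub (show (⟨y, hyB⟩ : B) ∈ _ from hyV)

lemma tendsto_uniform_riemannSum {φ : ℝ → ℝ} {a b : ℝ} (hab : a < b)
    (hφ : ContinuousOn φ (Set.Icc a b)) :
    Tendsto (fun k : ℕ => ∑ i ∈ Finset.range (k+1),
        ((b-a)/((k:ℝ)+1)) * φ (a + i * ((b-a)/((k:ℝ)+1))))
      atTop (𝓝 (∫ s in a..b, φ s)) := by
  have hUC : UniformContinuousOn φ (Set.Icc a b) :=
    isCompact_Icc.uniformContinuousOn_of_continuous hφ
  rw [Metric.tendsto_atTop]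
  intro ε hε
  have hba : (0:ℝ) < b - a := by linarith
  set ε' : ℝ := ε / (2 * (b - a)) with hε'def
  have hε' : 0 < ε' := by positivity
  obtain ⟨δ, hδ, hδp⟩ := Metric.uniformContinuousOn_iff.mp hUC ε' hε'
  obtain ⟨K, hK⟩ := exists_nat_gt ((b-a)/δ)
  refine ⟨K, fun k hk => ?_⟩
  set h : ℝ := (b-a)/((k:ℝ)+1) with hhdef
  have hk1 : (0:ℝ) < (k:ℝ)+1 := by positivity
  have hh0 : 0 < h := div_pos hba hk1
  have hhδ : h < δ := by
    have h1 : (b-a)/δ < (k:ℝ)+1 := by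
      have hKk : (K:ℝ) ≤ (k:ℝ) := by exact_mod_cast hk
      linarith
    rw [hhdef, div_lt_iff₀ hk1, mul_comm]
    exact (div_lt_iff₀ hδ).mp h1
  set T : ℕ → ℝ := fun i => a + i * h with hTdef
  have hT0 : T 0 = a := by simp [hTdef]
  have hTlast : T (k+1) = b := by
    rw [hTdef]; push_cast; rw [hhdef]; field_simp; ring
  have hTstep : ∀ i : ℕ, T (i+1) - T i = h := by
    intro i; rw [hTdef]; push_cast; ring
  have hTmem : ∀ i ≤ k+1, T i ∈ Set.Icc a b := by
    intro i hi
    constructor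
    · rw [hTdef]; have : (0:ℝ) ≤ i * h := by positivity
      simp only []; linarith
    · rw [← hTlast, hTdef]
      have : (i:ℝ) ≤ (k:ℝ)+1 := by exact_mod_cast hi
      have := mul_le_mul_of_nonneg_right this hh0.le
      push_cast; linarith
  have hint : ∀ i < k+1, IntervalIntegrable φ MeasureTheory.volume (T i) (T (i+1)) := by
    intro i hi
    apply ContinuousOn.intervalIntegrable
    apply hφ.mono
    rw [Set.uIcc_of_le (by linarith [hTstep i] : T i ≤ T (i+1))]
    exact Set.Icc_subset_Icc (hTmem i (by omega)).1 (hTmem (i+1) (by omega)).2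
  have hsplit : ∫ s in a..b, φ s = ∑ i ∈ Finset.range (k+1), ∫ s in (T i)..(T (i+1)), φ s := by
    rw [intervalIntegral.sum_integral_adjacent_intervals hint, hT0, hTlast]
  rw [Real.dist_eq, hsplit, ← Finset.sum_sub_distrib]
  have hterm : ∀ i ∈ Finset.range (k+1),
      |h * φ (T i) - ∫ s in (T i)..(T (i+1)), φ s| ≤ ε' * h := by
    intro i hi
    have hi' : i < k+1 := Finset.mem_range.mp hi
    have hconst : h * φ (T i) = ∫ _ in (T i)..(T (i+1)), φ (T i) := by
      rw [intervalIntegral.integral_const, hTstep i, smul_eq_mul]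
    rw [hconst, ← intervalIntegral.integral_sub (by simp) (hint i hi')]
    have hb' : ∀ s ∈ Set.uIoc (T i) (T (i+1)), ‖φ (T i) - φ s‖ ≤ ε' := by
      intro s hs
      rw [Set.uIoc_of_le (by linarith [hTstep i] : T i ≤ T (i+1))] at hs
      have hsmem : s ∈ Set.Icc a b :=
        ⟨(hTmem i (by omega)).1.trans hs.1.le, hs.2.trans (hTmem (i+1) (by omega)).2⟩
      have hdist : dist (T i) s < δ := by
        rw [Real.dist_eq, abs_sub_lt_iff]
        constructor <;> linarith [hs.1, hs.2, hTstep i, hhδ, hδ]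
      rw [Real.norm_eq_abs, ← Real.dist_eq]
      exact (hδp _ (hTmem i (by omega)) _ hsmem hdist).le
    have := intervalIntegral.norm_integral_le_of_norm_le_const hb'
    rw [Real.norm_eq_abs] at this
    calc |∫ s in (T i)..(T (i+1)), (φ (T i) - φ s)| ≤ ε' * |T (i+1) - T i| := this
      _ = ε' * h := by rw [hTstep i, abs_of_pos hh0]
  calc |∑ i ∈ Finset.range (k+1), (h * φ (T i) - ∫ s in (T i)..(T (i+1)), φ s)|
      ≤ ∑ i ∈ Finset.range (k+1), |h * φ (T i) - ∫ s in (T i)..(T (i+1)), φ s| :=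
        Finset.abs_sum_le_sum_abs _ _
    _ ≤ ∑ _i ∈ Finset.range (k+1), ε' * h := Finset.sum_le_sum hterm
    _ = ((k:ℝ)+1) * (ε' * h) := by
        rw [Finset.sum_const, Finset.card_range, nsmul_eq_mul]; push_cast; ring
    _ = ε' * (b - a) := by rw [hhdef]; field_simp
    _ = ε / 2 := by rw [hε'def]; field_simp
    _ < ε := by linarith

/-- A `τ`-continuous norm-bounded function on `[a,b]` is `τ`- and `γ`-Riemann integrable,
with the same integral `x`, and `x` is also the `γ`-Pettis integral of `f`. -/
theorem riemann_pettis_integral_of_tau_continuous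
    {X : Type*} [NormedAddCommGroup X] [NormedSpace ℝ X] [CompleteSpace X]
    (τ γ : TopologicalSpace X)
    (hcoarser : (UniformSpace.toTopologicalSpace : TopologicalSpace X) ≤ τ)
    (ht2 : @T2Space X τ) (haddgrp : @IsTopologicalAddGroup X τ _)
    (hsmul : @ContinuousSMul ℝ X _ _ τ) (hlc : @LocallyConvexSpace ℝ X _ _ _ _ τ)
    (hseqcompl : ∀ u : ℕ → X, (∃ C, ∀ n, ‖u n‖ ≤ C) → SeqCauchyIn τ u →
      ∃ l : X, Filter.Tendsto u Filter.atTop (@nhds X τ l))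
    (hnorming : ∀ x : X,
      IsLUB {r : ℝ | ∃ f : wDualR X, @Continuous X ℝ τ _ ⇑f ∧ ‖f‖ ≤ 1 ∧ r = |f x|} ‖x‖)
    (hmix : IsMixedTopology X τ γ)
    (a b : ℝ) (hab : a < b) (f : ℝ → X)
    (hfc : @ContinuousOn ℝ X _ τ f (Set.Icc a b))
    (hfb : ∃ C : ℝ, ∀ s ∈ Set.Icc a b, ‖f s‖ ≤ C) :
    ∃ x : X, HasRiemannIntegralIn τ f a b x ∧ HasRiemannIntegralIn γ f a b x ∧
      ∀ g : wDualR X, @Continuous X ℝ γ _ ⇑g →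
        IntervalIntegrable (fun s => g (f s)) MeasureTheory.volume a b ∧
        g x = ∫ s in a..b, g (f s) := by
  classical
  obtain ⟨C0, hC0⟩ := hfb
  set C : ℝ := max C0 0 with hCdef
  have hC : ∀ s ∈ Set.Icc a b, ‖f s‖ ≤ C := fun s hs => (hC0 s hs).trans (le_max_left _ _)
  have hCnn : (0:ℝ) ≤ C := le_max_right _ _
  have hufc := tau_unifCont τ haddgrp hfc
  have hcauchy := riemannSum_cauchy τ hcoarser haddgrp hsmul hlc hab hC hufc
  set T : ℕ → ℕ → ℝ := fun k i => a + i * ((b - a)/((k:ℝ)+1)) with hTdef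
  have hmesh0 : ∀ k : ℕ, 0 < (b-a)/((k:ℝ)+1) := fun k => div_pos (by linarith) (by positivity)
  have hstep : ∀ k i : ℕ, T k (i+1) - T k i = (b-a)/((k:ℝ)+1) := by
    intro k i; simp only [hTdef]; push_cast; ring
  have hTpart : ∀ (k : ℕ) (δ : ℝ), (b-a)/((k:ℝ)+1) < δ →
      IsTaggedPartition a b (k+1) (T k) (T k) δ := by
    intro k δ hδ
    refine ⟨by simp [hTdef], ?_, ?_, ?_, ?_⟩
    · simp only [hTdef]; push_cast; field_simp; ring
    · intro i _; rw [← sub_nonneg, hstep k i]; exact (hmesh0 k).le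
    · intro i _; rw [hstep k i]; exact hδ
    · intro i _; exact ⟨le_refl _, by rw [← sub_nonneg, hstep k i]; exact (hmesh0 k).le⟩
  set u : ℕ → X := fun k => RiemannSum f (k+1) (T k) (T k) with hudef
  have humesh : ∀ δ > (0:ℝ), ∃ K : ℕ, ∀ k ≥ K, (b-a)/((k:ℝ)+1) < δ := by
    intro δ hδ
    obtain ⟨K, hK⟩ := exists_nat_gt ((b-a)/δ)
    refine ⟨K, fun k hk => ?_⟩
    have h1 : (b-a)/δ < (k:ℝ)+1 := by
      have hKk : (K:ℝ) ≤ (k:ℝ) := by exact_mod_cast hk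
      linarith
    rw [div_lt_iff₀ (by positivity : (0:ℝ) < (k:ℝ)+1), mul_comm]
    exact (div_lt_iff₀ hδ).mp h1
  have hubd : ∀ k, ‖u k‖ ≤ (b-a)*C := by
    intro k
    simp only [hudef]
    exact riemannSum_norm_le hC (hTpart k ((b-a)/((k:ℝ)+1) + 1) (by linarith [hmesh0 k]))
  have hucau : SeqCauchyIn τ u := by
    intro W hW
    obtain ⟨δ, hδ, hp⟩ := hcauchy W hW
    obtain ⟨K, hK⟩ := humesh δ hδ
    exact ⟨K, fun m hm k hk2 =>
      hp _ _ _ _ _ _ (hTpart m δ (hK m hm)) (hTpart k δ (hK k hk2))⟩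
  obtain ⟨x, hx⟩ := hseqcompl u ⟨(b-a)*C, hubd⟩ hucau
  have hτint : HasRiemannIntegralIn τ f a b x := by
    letI : TopologicalSpace X := τ
    haveI : IsTopologicalAddGroup X := haddgrp
    intro U hU
    have hcont : ContinuousAt (fun w : X => x + w) 0 :=
      (continuous_const.add continuous_id).continuousAt
    have hW0 : (fun w : X => x + w) ⁻¹' U ∈ (𝓝 (0:X)) := by
      apply hcont.preimage_mem_nhds; rwa [add_zero]
    obtain ⟨V, hV, hVadd⟩ := exists_nhds_zero_half hW0
    obtain ⟨δ, hδ, hp⟩ := hcauchy V hV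
    have hsubx : ContinuousAt (fun y : X => y - x) x :=
      (continuous_id.sub continuous_const).continuousAt
    have hVx : (fun y : X => y - x) ⁻¹' V ∈ 𝓝 x := by
      apply hsubx.preimage_mem_nhds; rwa [sub_self]
    obtain ⟨K1, hK1⟩ := Filter.mem_atTop_sets.mp (hx hVx)
    obtain ⟨K2, hK2⟩ := humesh δ hδ
    refine ⟨δ, hδ, fun n t ξ hP => ?_⟩
    set k := max K1 K2 with hkdef
    have h1 : RiemannSum f n t ξ - u k ∈ V :=
      hp n t ξ (k+1) (T k) (T k) hP (hTpart k δ (hK2 k (le_max_right _ _)))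
    have h2 : u k - x ∈ V := hK1 k (le_max_left _ _)
    have h3 := hVadd _ h1 _ h2
    have h4 : RiemannSum f n t ξ - x ∈ (fun w : X => x + w) ⁻¹' U := by
      have heq : (RiemannSum f n t ξ - u k) + (u k - x) = RiemannSum f n t ξ - x := by abel
      rwa [heq] at h3
    simpa using h4
  have hxnorm : ‖x‖ ≤ (b-a)*C := by
    refine (hnorming x).2 ?_
    rintro r ⟨g, hgτ, hgn, rfl⟩
    have htend : Tendsto (fun k => g (u k)) atTop (𝓝 (g x)) :=
      (@Continuous.tendsto X ℝ τ _ g hgτ x).comp hx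
    have habs : Tendsto (fun k => |g (u k)|) atTop (𝓝 |g x|) :=
      (continuous_abs.tendsto _).comp htend
    refine le_of_tendsto habs (Filter.Eventually.of_forall fun k => ?_)
    calc |g (u k)| = ‖g (u k)‖ := (Real.norm_eq_abs _).symm
      _ ≤ ‖g‖ * ‖u k‖ := g.le_opNorm _
      _ ≤ 1 * ((b-a)*C) := mul_le_mul hgn (hubd k) (norm_nonneg _) zero_le_one
      _ = (b-a)*C := one_mul _
  have hsumbd : ∀ (n : ℕ) (t ξ : ℕ → ℝ) (δ : ℝ), IsTaggedPartition a b n t ξ δ →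
      RiemannSum f n t ξ ∈ Metric.closedBall (0:X) ((b-a)*C) := by
    intro n t ξ δ hP
    rw [Metric.mem_closedBall, dist_zero_right]
    exact riemannSum_norm_le hC hP
  have hxB : x ∈ Metric.closedBall (0:X) ((b-a)*C) := by
    rw [Metric.mem_closedBall, dist_zero_right]; exact hxnorm
  have hγint : HasRiemannIntegralIn γ f a b x := by
    intro U hU
    obtain ⟨V, hV, hVsub⟩ :=
      mixed_transfer (hmix.agrees _ Metric.isBounded_closedBall) hxB hU
    obtain ⟨δ, hδ, hp⟩ := hτint V hV
    exact ⟨δ, hδ, fun n t ξ hP => hVsub _ (hp n t ξ hP) (hsumbd n t ξ δ hP)⟩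
  have huγ : Tendsto u atTop (@nhds X γ x) := by
    rw [Filter.tendsto_atTop']
    intro U hU
    obtain ⟨δ, hδ, hp⟩ := hγint U hU
    obtain ⟨K, hK⟩ := humesh δ hδ
    exact ⟨K, fun k hk => hp (k+1) (T k) (T k) (hTpart k δ (hK k hk))⟩
  refine ⟨x, hτint, hγint, fun g hg => ?_⟩
  have hfB : ∀ s ∈ Set.Icc a b, f s ∈ Metric.closedBall (0:X) C := by
    intro s hs; rw [Metric.mem_closedBall, dist_zero_right]; exact hC s hs
  have hγf : @ContinuousOn ℝ X _ γ f (Set.Icc a b) := by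
    intro s hs
    have htend : Filter.Tendsto f (nhdsWithin s (Set.Icc a b)) (@nhds X γ (f s)) := by
      rw [Filter.tendsto_def]
      intro U hU
      obtain ⟨V, hV, hVsub⟩ :=
        mixed_transfer (hmix.agrees _ Metric.isBounded_closedBall) (hfB s hs) hU
      have h1 : f ⁻¹' V ∈ nhdsWithin s (Set.Icc a b) :=
        Filter.tendsto_def.mp (hfc s hs) V hV
      filter_upwards [h1, self_mem_nhdsWithin] with r hr1 hr2
      exact hVsub _ hr1 (hfB r hr2)
    exact htend
  have hgfc : ContinuousOn (fun s => g (f s)) (Set.Icc a b) := by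
    letI : TopologicalSpace X := γ
    exact hg.comp_continuousOn hγf
  refine ⟨?_, ?_⟩
  · have huIcc : ContinuousOn (fun s => g (f s)) (Set.uIcc a b) := by
      rwa [Set.uIcc_of_le hab.le]
    exact huIcc.intervalIntegrable
  · have hgu : Tendsto (fun k => g (u k)) atTop (𝓝 (g x)) :=
      (@Continuous.tendsto X ℝ γ _ g hg x).comp huγ
    have hgu_eq : ∀ k, g (u k) = ∑ i ∈ Finset.range (k+1),
        ((b-a)/((k:ℝ)+1)) * g (f (a + i * ((b-a)/((k:ℝ)+1)))) := by
      intro k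
      simp only [hudef, RiemannSum, map_sum]
      refine Finset.sum_congr rfl fun i _ => ?_
      rw [map_smul, smul_eq_mul, hstep k i]
    have hgu' : Tendsto (fun k => ∑ i ∈ Finset.range (k+1),
        ((b-a)/((k:ℝ)+1)) * g (f (a + i * ((b-a)/((k:ℝ)+1))))) atTop (𝓝 (g x)) :=
      hgu.congr hgu_eq
    exact tendsto_nhds_unique hgu' (tendsto_uniform_riemannSum hab hgfc)


end
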